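/- For all nonnegative real numbers a and b and any real exponent p ≥ 2, one has (a+b)^p ≥ a^p + b^p + (p-1)(a^{p-1} b + a b^{p-1}). -/

import Mathlib

lemma bern_rpow_aux {x y q : ℝ} (hx : 0 < x) (hy : 0 ≤ y) (hq : 1 ≤ q) :
    x ^ q + q * (x ^ (q - 1) * y) ≤ (x + y) ^ q := by
  have hs : -1 ≤ y / x := le_trans (by norm_num) (div_nonneg hy hx.le)
  have h := one_add_mul_self_le_rpow_one_add hs hq
  have hxq : 0 < x ^ q := Real.rpow_pos_of_pos hx q
  have h2 : x ^ q * (1 + q * (y / x)) ≤ x ^ q * (1 + y / x) ^ q :=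
    mul_le_mul_of_nonneg_left h hxq.le
  have h3 : x ^ q * (1 + y / x) ^ q = (x + y) ^ q := by
    rw [← Real.mul_rpow hx.le (by positivity)]
    congr 1
    field_simp
  have h4 : x ^ q * (1 + q * (y / x)) = x ^ q + q * (x ^ (q - 1) * y) := by
    have hx1 : x ^ (q - 1) = x ^ q / x := by
      rw [Real.rpow_sub hx, Real.rpow_one]
    rw [hx1]
    field_simp
  rw [h4, h3] at h2
  exact h2

theorem sum_rpow_mixed_lower_bound (a b : ℝ) (ha : 0 ≤ a) (hb : 0 ≤ b)
    (p : ℝ) (hp : 2 ≤ p) :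
    a ^ p + b ^ p + (p - 1) * (a ^ (p - 1) * b + a * b ^ (p - 1)) ≤ (a + b) ^ p := by
  have hp1 : (1 : ℝ) ≤ p - 1 := by linarith
  rcases eq_or_lt_of_le ha with rfl | ha'
  · simp [Real.zero_rpow (by positivity : p - 1 ≠ 0),
      Real.zero_rpow (by positivity : p ≠ 0)]
  rcases eq_or_lt_of_le hb with rfl | hb'
  · simp [Real.zero_rpow (by positivity : p - 1 ≠ 0),
      Real.zero_rpow (by positivity : p ≠ 0)]
  have h1 : a ^ (p - 1) + (p - 1) * (a ^ (p - 1 - 1) * b) ≤ (a + b) ^ (p - 1) :=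
    bern_rpow_aux ha' hb hp1
  have h2 : b ^ (p - 1) + (p - 1) * (b ^ (p - 1 - 1) * a) ≤ (a + b) ^ (p - 1) := by
    have := bern_rpow_aux hb' ha hp1
    rwa [add_comm b a] at this
  have key : a * (a ^ (p - 1) + (p - 1) * (a ^ (p - 1 - 1) * b))
      + b * (b ^ (p - 1) + (p - 1) * (b ^ (p - 1 - 1) * a)) ≤ (a + b) ^ p := by
    calc a * (a ^ (p - 1) + (p - 1) * (a ^ (p - 1 - 1) * b))
        + b * (b ^ (p - 1) + (p - 1) * (b ^ (p - 1 - 1) * a))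
        ≤ a * (a + b) ^ (p - 1) + b * (a + b) ^ (p - 1) := by
          gcongr
      _ = (a + b) * (a + b) ^ (p - 1) := by ring
      _ = (a + b) ^ p := by
          rw [← Real.rpow_one_add' (by positivity) (by intro h; linarith)]
          ring_nf
  have ea : a * a ^ (p - 1) = a ^ p := by
    nth_rewrite 1 [← Real.rpow_one a]
    rw [← Real.rpow_add ha']; ring_nf
  have ea2 : a * a ^ (p - 1 - 1) = a ^ (p - 1) := by
    nth_rewrite 1 [← Real.rpow_one a]
    rw [← Real.rpow_add ha']; ring_nf
  have eb : b * b ^ (p - 1) = b ^ p := by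
    nth_rewrite 1 [← Real.rpow_one b]
    rw [← Real.rpow_add hb']; ring_nf
  have eb2 : b * b ^ (p - 1 - 1) = b ^ (p - 1) := by
    nth_rewrite 1 [← Real.rpow_one b]
    rw [← Real.rpow_add hb']; ring_nf
  calc a ^ p + b ^ p + (p - 1) * (a ^ (p - 1) * b + a * b ^ (p - 1))
      = a * (a ^ (p - 1) + (p - 1) * (a ^ (p - 1 - 1) * b))
        + b * (b ^ (p - 1) + (p - 1) * (b ^ (p - 1 - 1) * a)) := by
        linear_combination -ea - eb - (p-1)*b*ea2 - (p-1)*a*eb2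
    _ ≤ (a + b) ^ p := key
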